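/- Every connected finite simple graph with at least one edge that is not atomic admits a decomposition consisting of exactly two subgraphs. -/

import Mathlib

open SimpleGraph

/-- The "graph of a decomposition": the intersection graph of a family of subgraphs,
where two distinct members are adjacent iff their vertex sets meet. -/
def decompGraph {V : Type*} {G : SimpleGraph V} {n : ℕ} (D : Fin n → G.Subgraph) :
    SimpleGraph (Fin n) where
  Adj i j := i ≠ j ∧ ((D i).verts ∩ (D j).verts).Nonempty
  symm := by
    constructor
    intro i j h
    exact ⟨h.1.symm, h.2.imp fun x hx => ⟨hx.2, hx.1⟩⟩
  loopless := ⟨fun i h => h.1 rfl⟩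

/-- `D` is a decomposition of the subgraph `H` of `G`: a family of `n ≥ 2` connected
subgraphs of `H`, each containing at least one edge, pairwise sharing no edges and at
most one vertex, whose vertex sets and edge sets union to those of `H`, and whose
intersection graph is a tree. -/
def IsDecompositionOf {V : Type*} {G : SimpleGraph V} (H : G.Subgraph) {n : ℕ}
    (D : Fin n → G.Subgraph) : Prop :=
  2 ≤ n ∧
  (∀ i, D i ≤ H) ∧
  (∀ i, (D i).Connected) ∧
  (∀ i, (D i).edgeSet.Nonempty) ∧
  (∀ i j, i ≠ j → (D i).edgeSet ∩ (D j).edgeSet = ∅) ∧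
  (∀ i j, i ≠ j → ((D i).verts ∩ (D j).verts).Subsingleton) ∧
  (⋃ i, (D i).verts) = H.verts ∧
  (⋃ i, (D i).edgeSet) = H.edgeSet ∧
  (decompGraph D).IsTree

/-- `D` is a decomposition of the graph `G` itself. -/
def IsDecomposition {V : Type*} (G : SimpleGraph V) {n : ℕ} (D : Fin n → G.Subgraph) : Prop :=
  IsDecompositionOf (⊤ : G.Subgraph) D

/-- A graph is atomic if it is connected, has at least one edge,
and admits no decomposition. -/
def IsAtomicGraph {V : Type*} (G : SimpleGraph V) : Prop :=
  G.Connected ∧ G.edgeSet.Nonempty ∧ ∀ (n : ℕ) (D : Fin n → G.Subgraph), ¬ IsDecomposition G D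

lemma walkSup_connected {V : Type*} {G : SimpleGraph V} {n : ℕ} {D : Fin n → G.Subgraph}
    (hc : ∀ k, (D k).Connected) {k l : Fin n} (p : (decompGraph D).Walk k l) :
    (⨆ m ∈ p.support, D m).Connected := by
  induction p with
  | nil => simpa using hc _
  | @cons a b c h q ih =>
    have hsup : (⨆ m ∈ (Walk.cons h q).support, D m) = D a ⊔ ⨆ m ∈ q.support, D m := by
      rw [Walk.support_cons]
      simp [List.mem_cons, iSup_or, iSup_sup_eq]
    rw [hsup]
    obtain ⟨v, hv1, hv2⟩ := h.2
    refine Subgraph.connected_sup (hc a).preconnected ih.preconnected ⟨v, hv1, ?_⟩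
    exact (le_iSup₂ (f := fun m (_ : m ∈ q.support) => D m) b q.start_mem_support).1 hv2

lemma leaf_not_mem_path_support {α : Type*} [DecidableEq α] {T : SimpleGraph α} {i j k l : α}
    (hleaf : ∀ m, T.Adj i m → m = j) {p : T.Walk k l} (hp : p.IsPath)
    (hk : k ≠ i) (hl : l ≠ i) : i ∉ p.support := by
  intro hi
  have hspec := p.take_spec hi
  set q := p.takeUntil i hi with hq
  set r := p.dropUntil i hi with hr
  have hqp : q.IsPath := hp.takeUntil hi
  have hrp : r.IsPath := hp.dropUntil hi
  obtain ⟨b, hb, r', hr'⟩ := r.exists_eq_cons_of_ne (Ne.symm hl)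
  obtain ⟨a, ha, q', hq'⟩ := q.reverse.exists_eq_cons_of_ne (Ne.symm hk)
  have haj : a = j := hleaf a ha
  have hbj : b = j := hleaf b hb
  have hnd : (q.support ++ r.support.tail).Nodup := by
    rw [← Walk.support_append, hspec]; exact hp.support_nodup
  have hjq : j ∈ q.support := by
    have h1 : j ∈ q.reverse.support := by
      rw [hq', Walk.support_cons]
      exact List.mem_cons_of_mem _ (haj ▸ q'.start_mem_support)
    rwa [Walk.support_reverse, List.mem_reverse] at h1
  have hjr : j ∈ r.support.tail := by
    rw [hr', Walk.support_cons]
    exact hbj ▸ r'.start_mem_support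
  exact (List.disjoint_of_nodup_append hnd) hjq hjr

lemma exists_leaf {n : ℕ} (hn : 2 ≤ n) (T : SimpleGraph (Fin n)) (hT : T.IsTree) :
    ∃ i j, T.Adj i j ∧ ∀ k, T.Adj i k → k = j := by
  classical
  have hconn := hT.isConnected
  haveI : NeZero n := ⟨by omega⟩
  obtain ⟨i, -, hmax⟩ := Finset.exists_max_image (Finset.univ : Finset (Fin n))
    (fun v => T.dist 0 v) ⟨0, Finset.mem_univ 0⟩
  have h1 : (1 : Fin n) ≠ 0 := by
    simp [Fin.ext_iff]; omega
  have hd1 : 0 < T.dist 0 1 := hconn.pos_dist_of_ne h1.symm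
  have hdi : 0 < T.dist 0 i := lt_of_lt_of_le hd1 (hmax 1 (Finset.mem_univ 1))
  have hi0 : i ≠ 0 := by
    rintro rfl; simp [SimpleGraph.dist_self] at hdi
  set d := T.dist 0 i with hdd
  obtain ⟨w, hw⟩ := hconn.exists_walk_length_eq_dist 0 i
  set q : T.Walk 0 i := (w.toPath : T.Walk 0 i) with hqdef
  have hqpath : q.IsPath := w.toPath.2
  have hwp : q.length = d :=
    le_antisymm (le_trans (Walk.length_bypass_le w) hw.le) (SimpleGraph.dist_le _)
  obtain ⟨j, hij, q', hq'⟩ := q.reverse.exists_eq_cons_of_ne hi0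
  refine ⟨i, j, hij, fun k hik => ?_⟩
  obtain ⟨w2, hw2⟩ := hconn.exists_walk_length_eq_dist 0 k
  set r : T.Walk 0 k := (w2.toPath : T.Walk 0 k) with hrdef
  have hrpath : r.IsPath := w2.toPath.2
  have hrlen : r.length = T.dist 0 k :=
    le_antisymm (le_trans (Walk.length_bypass_le w2) hw2.le) (SimpleGraph.dist_le _)
  have hrd : r.length ≤ d := hrlen ▸ hmax k (Finset.mem_univ k)
  have hik' : i ≠ k := hik.ne
  have hir : i ∉ r.support := by
    intro hi
    have htake := r.take_spec hi
    have hlen : (r.takeUntil i hi).length + (r.dropUntil i hi).length = r.length := by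
      rw [← Walk.length_append, htake]
    have hdrop1 : 1 ≤ (r.dropUntil i hi).length := by
      by_contra hcon
      push_neg at hcon
      exact hik' (Walk.eq_of_length_eq_zero (p := r.dropUntil i hi) (by omega))
    have hdt : d ≤ (r.takeUntil i hi).length := SimpleGraph.dist_le _
    omega
  have hp1 : (q.reverse).IsPath := hqpath.reverse
  have hp2 : (Walk.cons hik r.reverse).IsPath := by
    refine (hrpath.reverse).cons ?_
    rwa [Walk.support_reverse, List.mem_reverse]
  have huniq := hT.IsAcyclic.path_unique ⟨q.reverse, hp1⟩ ⟨Walk.cons hik r.reverse, hp2⟩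
  have heq : q.reverse = Walk.cons hik r.reverse := congrArg Subtype.val huniq
  have hgv : q.reverse.getVert 1 = (Walk.cons hik r.reverse).getVert 1 := by rw [heq]
  rw [hq'] at hgv
  simpa [Walk.getVert_cons_succ, Walk.getVert_zero] using hgv.symm

/-- Every connected finite simple graph with at least one edge that is not atomic
admits a decomposition consisting of exactly two subgraphs. -/
theorem exists_decomposition_two {V : Type*} [Fintype V] (G : SimpleGraph V)
    (hconn : G.Connected) (hedge : G.edgeSet.Nonempty) (hna : ¬ IsAtomicGraph G) :
    ∃ D : Fin 2 → G.Subgraph, IsDecomposition G D := by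
  classical
  obtain ⟨n, D, hD⟩ : ∃ (n : ℕ) (D : Fin n → G.Subgraph), IsDecomposition G D := by
    by_contra hcon
    push_neg at hcon
    exact hna ⟨hconn, hedge, fun n D hD => hcon n D hD⟩
  obtain ⟨hn2, hle, hc, he, hdisj, hss, hVu, hEu, hT⟩ := hD
  obtain ⟨i, j, hij, hleaf⟩ := exists_leaf hn2 (decompGraph D) hT
  set B : G.Subgraph := ⨆ k, ⨆ _ : k ≠ i, D k with hBdef
  have hDleB : ∀ k, k ≠ i → D k ≤ B := fun k hk =>
    le_iSup₂ (f := fun k (_ : k ≠ i) => D k) k hk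
  have hmemB : ∀ v, v ∈ B.verts ↔ ∃ k, k ≠ i ∧ v ∈ (D k).verts := by
    intro v; rw [hBdef]; simp [Subgraph.verts_iSup]
  have hmemBe : ∀ e, e ∈ B.edgeSet ↔ ∃ k, k ≠ i ∧ e ∈ (D k).edgeSet := by
    intro e; rw [hBdef]; simp [Subgraph.edgeSet_iSup]
  have hji : j ≠ i := hij.ne'
  have hBconn : B.Connected := by
    rw [Subgraph.connected_iff]
    constructor
    · constructor
      rintro ⟨u, hu⟩ ⟨v, hv⟩
      obtain ⟨k, hk, hku⟩ := (hmemB u).1 hu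
      obtain ⟨l, hl, hlv⟩ := (hmemB v).1 hv
      obtain ⟨w0⟩ := hT.isConnected k l
      set p : (decompGraph D).Walk k l := (w0.toPath : (decompGraph D).Walk k l) with hpd
      have hppath : p.IsPath := w0.toPath.2
      have hip : i ∉ p.support := leaf_not_mem_path_support hleaf hppath hk hl
      have hHconn : (⨆ m ∈ p.support, D m).Connected := walkSup_connected hc p
      have hHB : (⨆ m ∈ p.support, D m) ≤ B := by
        refine iSup₂_le fun m hm => hDleB m ?_
        rintro rfl; exact hip hm
      have huH : u ∈ (⨆ m ∈ p.support, D m).verts :=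
        (le_iSup₂ (f := fun m (_ : m ∈ p.support) => D m) k p.start_mem_support).1 hku
      have hvH : v ∈ (⨆ m ∈ p.support, D m).verts :=
        (le_iSup₂ (f := fun m (_ : m ∈ p.support) => D m) l p.end_mem_support).1 hlv
      exact (hHconn ⟨u, huH⟩ ⟨v, hvH⟩).map (Subgraph.inclusion hHB)
    · obtain ⟨v, hv⟩ := (hc j).nonempty
      exact ⟨v, (hmemB v).2 ⟨j, hji, hv⟩⟩
  have hIB : (D i).verts ∩ B.verts ⊆ (D i).verts ∩ (D j).verts := by
    rintro v ⟨h1, h2⟩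
    obtain ⟨k, hk, hkv⟩ := (hmemB v).1 h2
    have hkj : k = j := hleaf k ⟨fun h => hk h.symm, ⟨v, h1, hkv⟩⟩
    exact ⟨h1, hkj ▸ hkv⟩
  have hIBne : ((D i).verts ∩ B.verts).Nonempty := by
    obtain ⟨v, hv1, hv2⟩ := hij.2
    exact ⟨v, hv1, (hmemB v).2 ⟨j, hji, hv2⟩⟩
  have hED : (D i).edgeSet ∩ B.edgeSet = ∅ := by
    ext e
    simp only [Set.mem_inter_iff, Set.mem_empty_iff_false, iff_false, not_and]
    intro h1 h2
    obtain ⟨k, hk, hke⟩ := (hmemBe e).1 h2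
    have h3 : e ∈ (D i).edgeSet ∩ (D k).edgeSet := ⟨h1, hke⟩
    rw [hdisj i k fun h => hk h.symm] at h3
    exact h3
  have hVU : (D i).verts ∪ B.verts = Set.univ := by
    ext v
    simp only [Set.mem_univ, iff_true, Set.mem_union]
    have hv : v ∈ ⋃ k, (D k).verts := by rw [hVu, Subgraph.verts_top]; trivial
    obtain ⟨k, hk⟩ := Set.mem_iUnion.1 hv
    by_cases hki : k = i
    · exact Or.inl (hki ▸ hk)
    · exact Or.inr ((hmemB v).2 ⟨k, hki, hk⟩)
  have hEU : (D i).edgeSet ∪ B.edgeSet = G.edgeSet := by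
    ext e
    constructor
    · rintro (h | h)
      · exact (D i).edgeSet_subset h
      · exact B.edgeSet_subset h
    · intro h
      have hv : e ∈ ⋃ k, (D k).edgeSet := by
        rw [hEu, Subgraph.edgeSet_top]; exact h
      obtain ⟨k, hk⟩ := Set.mem_iUnion.1 hv
      by_cases hki : k = i
      · exact Or.inl (hki ▸ hk)
      · exact Or.inr ((hmemBe e).2 ⟨k, hki, hk⟩)
  have hsub : ((D i).verts ∩ B.verts).Subsingleton :=
    (hss i j hij.ne).anti hIB
  refine ⟨![D i, B], le_refl 2, fun _ => le_top, ?_, ?_, ?_, ?_, ?_, ?_, ?_⟩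
  · intro k
    fin_cases k
    · exact hc i
    · exact hBconn
  · intro k
    fin_cases k
    · exact he i
    · obtain ⟨e, hee⟩ := he j
      exact ⟨e, Subgraph.edgeSet_mono (hDleB j hji) hee⟩
  · intro k l hkl
    fin_cases k <;> fin_cases l <;> first
      | exact absurd rfl hkl
      | exact hED
      | (rw [Set.inter_comm]; exact hED)
  · intro k l hkl
    fin_cases k <;> fin_cases l <;> first
      | exact absurd rfl hkl
      | exact hsub
      | (rw [Set.inter_comm]; exact hsub)
  · rw [Subgraph.verts_top]
    ext v
    rw [Set.mem_iUnion, Fin.exists_fin_two]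
    simp only [Set.mem_univ, iff_true]
    have hv : v ∈ (D i).verts ∪ B.verts := by rw [hVU]; trivial
    exact hv
  · rw [Subgraph.edgeSet_top]
    ext e
    rw [Set.mem_iUnion, Fin.exists_fin_two]
    rw [← hEU]
    rfl
  · have hFadj : (decompGraph ![D i, B]).Adj 0 1 := ⟨by decide, hIBne⟩
    constructor
    · rw [connected_iff]
      refine ⟨?_, ⟨0⟩⟩
      intro u v
      fin_cases u <;> fin_cases v
      · exact Reachable.refl _
      · exact hFadj.reachable
      · exact hFadj.symm.reachable
      · exact Reachable.refl _
    · intro v c hcyc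
      have h3 := hcyc.three_le_length
      have hnd : c.support.tail.Nodup := hcyc.support_nodup
      have hcard : c.support.tail.length ≤ 2 := by
        simpa using hnd.length_le_card
      have hlen : c.support.length = c.length + 1 := c.length_support
      have : c.support.tail.length = c.support.length - 1 := c.support.length_tail
      omega
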